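/- Let A, B, C be integers, not all zero, with gcd(A,B,C) = 1, and let φ, θ be reals with Aφ + Bθ = C. Write D = gcd(A,B), A' = A/D, B' = B/D. If |A'| > 1/ε, or |B'| > 1/ε, or D > 1/ε (with the convention for the degenerate cases A'=0 or B'=0 that the loops are |B| or |A| equally spaced horizontal/vertical circles), then the union of loops ⋃_{k=0}^{D−1} {(x,y) ∈ T² : A'x + B'y ≡ k/D mod 1} is ε-dense in T². -/

import Mathlib

lemma my_aux (A' B' D : ℤ) (hA' : A' ≠ 0) (hD : (0:ℤ) < D) (ε : ℝ) (hε : 0 < ε)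
    (hbig : (D:ℝ) * |(A':ℝ)| > 1/ε) (x y : ℝ) :
    ∃ q : AddCircle (1:ℝ) × AddCircle (1:ℝ),
      (∃ k : ℤ, A' • q.1 + B' • q.2 = (((k:ℝ)/(D:ℝ) : ℝ) : AddCircle (1:ℝ))) ∧
      dist (((x:ℝ) : AddCircle (1:ℝ)), ((y:ℝ) : AddCircle (1:ℝ))) q ≤ ε := by
  have hA'R : (A':ℝ) ≠ 0 := Int.cast_ne_zero.mpr hA'
  have hDR : (0:ℝ) < (D:ℝ) := by exact_mod_cast hD
  set v : ℝ := (A':ℝ)*x + (B':ℝ)*y with hv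
  set k : ℤ := ⌊(D:ℝ)*v⌋ with hk
  set t : ℝ := ((k:ℝ)/(D:ℝ) - v)/(A':ℝ) with ht
  refine ⟨(((x+t : ℝ) : AddCircle (1:ℝ)), ((y:ℝ) : AddCircle (1:ℝ))), ⟨k, ?_⟩, ?_⟩
  · show A' • ((x+t : ℝ) : AddCircle (1:ℝ)) + B' • ((y:ℝ) : AddCircle (1:ℝ)) = _
    rw [← AddCircle.coe_zsmul, ← AddCircle.coe_zsmul, ← AddCircle.coe_add]
    congr 1
    rw [zsmul_eq_mul, zsmul_eq_mul]
    have e : (A':ℝ) * t = (k:ℝ)/(D:ℝ) - v := by rw [ht]; field_simp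
    linear_combination e - hv
  · have htle : |t| ≤ ε := by
      have h1 : |((k:ℝ)/(D:ℝ) - v)| ≤ 1/(D:ℝ) := by
        have e : (k:ℝ)/(D:ℝ) - v = ((k:ℝ) - (D:ℝ)*v)/(D:ℝ) := by field_simp
        rw [e, abs_div, abs_of_pos hDR, div_le_div_iff₀ hDR hDR]
        have hf1 : (k:ℝ) ≤ (D:ℝ)*v := Int.floor_le _
        have hf2 : (D:ℝ)*v < (k:ℝ) + 1 := Int.lt_floor_add_one _
        have : |(k:ℝ) - (D:ℝ)*v| ≤ 1 := by rw [abs_le]; constructor <;> linarith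
        nlinarith
      have h2 : |t| ≤ 1/((D:ℝ) * |(A':ℝ)|) := by
        rw [ht, abs_div]
        rw [div_le_div_iff₀ (abs_pos.mpr hA'R) (by positivity)]
        calc |((k:ℝ)/(D:ℝ) - v)| * ((D:ℝ) * |(A':ℝ)|) ≤ (1/(D:ℝ)) * ((D:ℝ) * |(A':ℝ)|) := by
              apply mul_le_mul_of_nonneg_right h1 (by positivity)
          _ = |(A':ℝ)| := by field_simp
          _ = 1 * |(A':ℝ)| := by ring
      have h3 : 1/((D:ℝ) * |(A':ℝ)|) ≤ ε := by
        rw [div_le_iff₀ (by positivity)]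
        rw [gt_iff_lt, div_lt_iff₀ hε] at hbig
        nlinarith
      linarith
    rw [Prod.dist_eq]
    simp only [max_le_iff]
    constructor
    · calc dist ((x:ℝ) : AddCircle (1:ℝ)) ((x+t : ℝ) : AddCircle (1:ℝ))
          = ‖((x:ℝ) : AddCircle (1:ℝ)) - ((x+t : ℝ) : AddCircle (1:ℝ))‖ := dist_eq_norm _ _
        _ = ‖((x - (x+t) : ℝ) : AddCircle (1:ℝ))‖ := by rw [← AddCircle.coe_sub]
        _ ≤ ‖(x - (x+t) : ℝ)‖ := QuotientAddGroup.norm_mk_le_norm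
        _ = |t| := by rw [Real.norm_eq_abs, show x - (x+t) = -t by ring, abs_neg]
        _ ≤ ε := htle
    · simp [le_of_lt hε]

/-- Let `A, B, C` be integers, not all zero, with `gcd(A,B,C) = 1`, and
`Aφ + Bθ = C`. Put `D = gcd(A,B)`, `A' = A/D`, `B' = B/D`. If `|A'| > 1/ε` or
`|B'| > 1/ε` or `D > 1/ε`, then the union of the torus-loops
`{(x,y) : A'x + B'y ≡ k/D mod 1}` over `k` is `ε`-dense in the torus. -/
theorem stmt5 (A B C : ℤ) (hAB : ¬ (A = 0 ∧ B = 0))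
    (hgcd : Int.gcd (Int.gcd A B : ℤ) C = 1)
    (φ θ : ℝ) (heq : (A : ℝ) * φ + (B : ℝ) * θ = (C : ℝ))
    (ε : ℝ) (hε : 0 < ε)
    (hbig : |(A / (Int.gcd A B : ℤ) : ℤ)| > (1 : ℝ) / ε ∨
            |(B / (Int.gcd A B : ℤ) : ℤ)| > (1 : ℝ) / ε ∨
            ((Int.gcd A B : ℤ) : ℝ) > 1 / ε) :
    ∀ p : AddCircle (1 : ℝ) × AddCircle (1 : ℝ),
      ∃ q ∈ {q : AddCircle (1 : ℝ) × AddCircle (1 : ℝ) | ∃ k : ℤ,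
        (A / (Int.gcd A B : ℤ)) • q.1 + (B / (Int.gcd A B : ℤ)) • q.2
          = (((k : ℝ) / ((Int.gcd A B : ℤ) : ℝ) : ℝ) : AddCircle (1 : ℝ))},
      dist p q ≤ ε := by
  intro p
  set D : ℤ := (Int.gcd A B : ℤ) with hDdef
  set A' : ℤ := A / D with hA'def
  set B' : ℤ := B / D with hB'def
  have hD : (0:ℤ) < D := by
    have : Int.gcd A B ≠ 0 := by
      intro h
      exact hAB (Int.gcd_eq_zero_iff.mp h)
    rw [hDdef]
    exact_mod_cast Nat.pos_of_ne_zero this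
  have hDR : (1:ℝ) ≤ (D:ℝ) := by exact_mod_cast hD
  have hABne : A' ≠ 0 ∨ B' ≠ 0 := by
    by_contra h
    push_neg at h
    apply hAB
    have hdA : D ∣ A := Int.gcd_dvd_left A B
    have hdB : D ∣ B := Int.gcd_dvd_right A B
    constructor
    · have := Int.ediv_mul_cancel hdA
      rw [← hA'def] at this; rw [← this, h.1]; ring
    · have := Int.ediv_mul_cancel hdB
      rw [← hB'def] at this; rw [← this, h.2]; ring
  obtain ⟨x, hx⟩ := QuotientAddGroup.mk_surjective p.1
  obtain ⟨y, hy⟩ := QuotientAddGroup.mk_surjective p.2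
  have hp : p = ((x : AddCircle (1:ℝ)), (y : AddCircle (1:ℝ))) := by
    ext <;> simp [← hx, ← hy] <;> rfl
  -- reduce to two symmetric cases
  have key : ((A' ≠ 0 ∧ (D:ℝ) * |(A':ℝ)| > 1/ε) ∨ (B' ≠ 0 ∧ (D:ℝ) * |(B':ℝ)| > 1/ε)) := by
    rcases hbig with h | h | h
    · left
      have h' : ((|A'| : ℤ) : ℝ) > 1/ε := h
      rw [Int.cast_abs] at h'
      have hne : A' ≠ 0 := by
        intro h0; rw [h0] at h'; simp at h'
        exact absurd h' (not_lt.mpr (le_of_lt (by positivity)))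
      refine ⟨hne, ?_⟩
      nlinarith [abs_nonneg ((A':ℝ)), one_div_pos.mpr hε]
    · right
      have h' : ((|B'| : ℤ) : ℝ) > 1/ε := h
      rw [Int.cast_abs] at h'
      have hne : B' ≠ 0 := by
        intro h0; rw [h0] at h'; simp at h'
        exact absurd h' (not_lt.mpr (le_of_lt (by positivity)))
      refine ⟨hne, ?_⟩
      nlinarith [abs_nonneg ((B':ℝ)), one_div_pos.mpr hε]
    · rcases hABne with hne | hne
      · left
        refine ⟨hne, ?_⟩
        have : (1:ℝ) ≤ |(A':ℝ)| := by
          rw [← Int.cast_abs]; exact_mod_cast Int.one_le_abs hne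
        nlinarith [one_div_pos.mpr hε]
      · right
        refine ⟨hne, ?_⟩
        have : (1:ℝ) ≤ |(B':ℝ)| := by
          rw [← Int.cast_abs]; exact_mod_cast Int.one_le_abs hne
        nlinarith [one_div_pos.mpr hε]
  rcases key with ⟨hne, hb⟩ | ⟨hne, hb⟩
  · obtain ⟨q, ⟨k, hk⟩, hdist⟩ := my_aux A' B' D hne hD ε hε hb x y
    exact ⟨q, ⟨k, hk⟩, by rw [hp]; exact hdist⟩
  · obtain ⟨q, ⟨k, hk⟩, hdist⟩ := my_aux B' A' D hne hD ε hε hb y x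
    refine ⟨(q.2, q.1), ⟨k, ?_⟩, ?_⟩
    · show A' • q.2 + B' • q.1 = _
      rw [add_comm]; exact hk
    · rw [hp, Prod.dist_eq]
      rw [Prod.dist_eq] at hdist
      simp only [max_le_iff] at hdist ⊢
      exact ⟨hdist.2, hdist.1⟩
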